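/- For the spackling map spack(P) := ∏_{t=0}^{T} η_t(U_{≤t−1/2} P U_{≤t−1/2}†) applied to Paulis P on the circuit inputs, with T even: spack preserves the commutation relations of the Pauli group, i.e., spack(P) and spack(Q) commute if and only if P and Q commute, and spack(PQ) = ±spack(P)spack(Q). -/

import Mathlib

private lemma list_prod_unitary {dim : ℕ} :
    ∀ l : List (Matrix (Fin dim) (Fin dim) ℂ),
      (∀ M ∈ l, M.conjTranspose * M = 1 ∧ M * M.conjTranspose = 1) →
      (l.prod.conjTranspose * l.prod = 1 ∧ l.prod * l.prod.conjTranspose = 1) := by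
  intro l
  induction l with
  | nil => intro _; simp
  | cons M l ih =>
      intro h
      have hM := h M List.mem_cons_self
      have hl := ih (fun N hN => h N (List.mem_cons_of_mem _ hN))
      constructor
      · calc (M * l.prod).conjTranspose * (M * l.prod)
            = l.prod.conjTranspose * (M.conjTranspose * M) * l.prod := by
              simp [Matrix.conjTranspose_mul, mul_assoc]
        _ = 1 := by rw [hM.1]; simp [hl.1]
      · calc (M * l.prod) * (M * l.prod).conjTranspose
            = M * (l.prod * l.prod.conjTranspose) * M.conjTranspose := by
              simp [Matrix.conjTranspose_mul, mul_assoc]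
        _ = 1 := by rw [hl.2]; simp [hM.2]

/-- The spackling map preserves commutation relations.  For a Clifford circuit of even
depth `T`, with partial products `W t = U_{t−1/2} ⋯ U_{1/2}` (`W 0 = I`), define
`spack(P) t = W t · P · W t†` (the time-evolved copy of the input Pauli `P` placed on
slice `t`); the spackled operator is the tensor product of these `T+1` slices.
Then: (a) `spack(P)` and `spack(Q)` commute (as tensor operators: the per-slice
commutation signs `ε t ∈ {±1}` multiply to `+1`) if and only if `P` and `Q` commute;
(b) `spack(PQ) = ± spack(P)·spack(Q)` slicewise. -/
theorem spackling_preserves_commutation {dim T : ℕ}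
    (hT : Even T)
    (U : Fin T → Matrix (Fin dim) (Fin dim) ℂ)
    (hU : ∀ t, (U t).conjTranspose * U t = 1 ∧ U t * (U t).conjTranspose = 1)
    (W : Fin (T + 1) → Matrix (Fin dim) (Fin dim) ℂ)
    (hW : ∀ t : Fin (T + 1),
      W t = ((List.ofFn U).take (t : ℕ)).reverse.prod)
    (PauliSet : Set (Matrix (Fin dim) (Fin dim) ℂ))
    (hone : (1 : Matrix (Fin dim) (Fin dim) ℂ) ∈ PauliSet)
    (hsign : ∀ P ∈ PauliSet, ∀ Q ∈ PauliSet, P * Q = Q * P ∨ P * Q = -(Q * P))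
    (spack : Matrix (Fin dim) (Fin dim) ℂ →
      Fin (T + 1) → Matrix (Fin dim) (Fin dim) ℂ)
    (hspack : ∀ P t, spack P t = W t * P * (W t).conjTranspose)
    (P Q : Matrix (Fin dim) (Fin dim) ℂ)
    (hP : P ∈ PauliSet) (hQ : Q ∈ PauliSet) :
    ((∃ ε : Fin (T + 1) → ℂ,
        (∀ t, (ε t = 1 ∨ ε t = -1) ∧
          spack P t * spack Q t = ε t • (spack Q t * spack P t)) ∧
        (∏ t, ε t) = 1) ↔ P * Q = Q * P) ∧
    (∀ t, spack (P * Q) t = spack P t * spack Q t ∨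
      spack (P * Q) t = -(spack P t * spack Q t)) := by

  -- W t is unitary
  have hWu : ∀ t : Fin (T + 1),
      (W t).conjTranspose * W t = 1 ∧ W t * (W t).conjTranspose = 1 := by
    intro t
    rw [hW t]
    apply list_prod_unitary
    intro M hM
    rw [List.mem_reverse] at hM
    have hM' : M ∈ List.ofFn U := List.mem_of_mem_take hM
    rw [List.mem_ofFn] at hM'
    obtain ⟨i, rfl⟩ := hM'
    exact hU i
  -- key multiplicativity
  have key : ∀ (A B : Matrix (Fin dim) (Fin dim) ℂ) (t : Fin (T + 1)),
      spack A t * spack B t = W t * (A * B) * (W t).conjTranspose := by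
    intro A B t
    rw [hspack, hspack]
    calc (W t * A * (W t).conjTranspose) * (W t * B * (W t).conjTranspose)
        = W t * A * ((W t).conjTranspose * W t) * B * (W t).conjTranspose := by
          simp [mul_assoc]
      _ = W t * (A * B) * (W t).conjTranspose := by rw [(hWu t).1]; simp [mul_assoc]
  have inj : ∀ (X : Matrix (Fin dim) (Fin dim) ℂ) (t : Fin (T + 1)),
      W t * X * (W t).conjTranspose = 0 → X = 0 := by
    intro X t h
    have : (W t).conjTranspose * (W t * X * (W t).conjTranspose) * W t = 0 := by
      rw [h]; simp
    calc X = ((W t).conjTranspose * W t) * X * ((W t).conjTranspose * W t) := by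
            rw [(hWu t).1]; simp
      _ = 0 := by rw [← this]; simp [mul_assoc]
  constructor
  · constructor
    · rintro ⟨ε, hε, hprod⟩
      rcases hsign P hP Q hQ with h | h
      · exact h
      · by_cases hzero : P * Q = Q * P
        · exact hzero
        have hX : W 0 * (Q * P) * (W 0).conjTranspose ≠ 0 := by
          intro h0
          have : Q * P = 0 := inj _ _ h0
          exact hzero (by simp [h, this])
        have hεneg : ∀ t, ε t = -1 := by
          intro t
          rcases (hε t).1 with h1 | h1
          · exfalso
            have h2 := (hε t).2
            rw [key, key, h, h1, one_smul] at h2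
            rw [Matrix.mul_neg, Matrix.neg_mul] at h2
            set X := W t * (Q * P) * (W t).conjTranspose with hXdef
            have h4 : X + X = 0 := by nth_rewrite 1 [← h2]; exact neg_add_cancel X
            have h5 : (2 : ℂ) • X = 0 := by rw [two_smul]; exact h4
            rcases smul_eq_zero.mp h5 with h6 | h6
            · norm_num at h6
            · have : Q * P = 0 := inj _ _ h6
              exact hzero (by simp [h, this])
          · exact h1
        exfalso
        rw [Finset.prod_congr rfl (fun t _ => hεneg t)] at hprod
        rw [Finset.prod_const] at hprod
        simp only [Finset.card_univ, Fintype.card_fin] at hprod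
        have : ((-1 : ℂ)) ^ (T + 1) = -1 := by
          rw [pow_succ]
          rcases hT with ⟨k, hk⟩
          rw [hk, ← two_mul, pow_mul]
          norm_num
        rw [this] at hprod
        norm_num at hprod
    · intro hcomm
      refine ⟨fun _ => 1, fun t => ⟨Or.inl rfl, ?_⟩, by simp⟩
      rw [one_smul, key, key, hcomm]
  · intro t
    left
    rw [hspack, ← key, hspack, hspack]
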